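/- Let n ≥ 5 and let L = F2(β_4,…,β_n,γ) be an n-dimensional complex filiform Leibniz algebra of the second family. For any pre-derivation P of L, writing P(e_3) = Σ_{t=1}^n c_t e_t in the basis e_1,…,e_n, one has c_1 = 0 and c_2 β_t = 0 for all 4 ≤ t ≤ n−1. -/

import Mathlib

open Finset

/-- The basis vector `e_i` (1-indexed) of `ℂ^n`; zero if `i` is out of range. -/
noncomputable def E (n : ℕ) (i : ℕ) : Fin n → ℂ :=
  if h : 1 ≤ i ∧ i ≤ n then Pi.single (⟨i - 1, by omega⟩ : Fin n) 1 else 0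

/-- The bilinear bracket on `ℂ^n` determined by the products `m i j` of the
(1-indexed) basis vectors `e_i`, `e_j`. -/
noncomputable def bracketOf (n : ℕ) (m : ℕ → ℕ → Fin n → ℂ)
    (x y : Fin n → ℂ) : Fin n → ℂ :=
  ∑ i : Fin n, ∑ j : Fin n, (x i * y j) • m (i.1 + 1) (j.1 + 1)

/-- `P` is a pre-derivation of the algebra with bracket `br`. -/
def IsPreDeriv (n : ℕ) (br : (Fin n → ℂ) → (Fin n → ℂ) → Fin n → ℂ)
    (P : Module.End ℂ (Fin n → ℂ)) : Prop :=
  ∀ x y z, P (br (br x y) z) =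
    br (br (P x) y) z + br (br x (P y)) z + br (br x y) (P z)

/-- Multiplication table of the second family `F2(β₄,…,βₙ,γ)` of filiform Leibniz
algebras: `[e₁,e₁]=e₃`; `[eᵢ,e₁]=e_{i+1}` for `3 ≤ i ≤ n-1`;
`[e₁,e₂]=∑_{t=4}^{n} β_t e_t`; `[e₂,e₂]=γ eₙ`;
`[eⱼ,e₂]=∑_{t=j+2}^{n} β_{t-j+2} e_t` for `3 ≤ j ≤ n-2`; all other products zero. -/
noncomputable def F2mul (n : ℕ) (β : ℕ → ℂ) (γ : ℂ) (i j : ℕ) : Fin n → ℂ :=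
  if i = 1 ∧ j = 1 then E n 3
  else if 3 ≤ i ∧ i ≤ n - 1 ∧ j = 1 then E n (i + 1)
  else if i = 1 ∧ j = 2 then ∑ t ∈ Icc 4 n, β t • E n t
  else if i = 2 ∧ j = 2 then γ • E n n
  else if 3 ≤ i ∧ i ≤ n - 2 ∧ j = 2 then ∑ t ∈ Icc (i + 2) n, β (t - i + 2) • E n t
  else 0

section Aux
lemma E_eq (n i : ℕ) (h1 : 1 ≤ i) (h2 : i ≤ n) :
    E n i = Pi.single (⟨i - 1, by omega⟩ : Fin n) 1 := by
  simp [E, h1, h2]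

lemma E_apply (n i : ℕ) (h1 : 1 ≤ i) (h2 : i ≤ n) (k : Fin n) :
    E n i k = if (k : ℕ) = i - 1 then 1 else 0 := by
  rw [E_eq n i h1 h2, Pi.single_apply]
  simp [Fin.ext_iff]

lemma brEE (n : ℕ) (m : ℕ → ℕ → Fin n → ℂ) {a b : ℕ}
    (ha1 : 1 ≤ a) (ha2 : a ≤ n) (hb1 : 1 ≤ b) (hb2 : b ≤ n) :
    bracketOf n m (E n a) (E n b) = m a b := by
  rw [E_eq n a ha1 ha2, E_eq n b hb1 hb2]
  unfold bracketOf
  rw [Fintype.sum_eq_single (⟨a - 1, by omega⟩ : Fin n)]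
  · rw [Fintype.sum_eq_single (⟨b - 1, by omega⟩ : Fin n)]
    · rw [Pi.single_eq_same, Pi.single_eq_same]
      have h1 : a - 1 + 1 = a := by omega
      have h2 : b - 1 + 1 = b := by omega
      simp [h1, h2]
    · intro j hj
      rw [Pi.single_eq_of_ne hj]
      simp
  · intro i hi
    rw [Pi.single_eq_of_ne hi]
    exact Finset.sum_eq_zero fun j _ => by simp

lemma br_E3_right (n : ℕ) (hn : 5 ≤ n) (β : ℕ → ℂ) (γ : ℂ) (w : Fin n → ℂ) :
    bracketOf n (F2mul n β γ) w (E n 3) = 0 := by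
  unfold bracketOf
  refine Finset.sum_eq_zero fun i _ => Finset.sum_eq_zero fun j _ => ?_
  by_cases hj : (j : ℕ) + 1 = 3
  · have : F2mul n β γ ((i : ℕ) + 1) ((j : ℕ) + 1) = 0 := by
      rw [hj]
      unfold F2mul
      rw [if_neg (by omega), if_neg (by omega), if_neg (by omega),
          if_neg (by omega), if_neg (by omega)]
    simp [this]
  · have : E n 3 j = 0 := by
      rw [E_apply n 3 (by omega) (by omega), if_neg (by omega)]
    simp [this]

lemma br_add_right (n : ℕ) (m : ℕ → ℕ → Fin n → ℂ) (x y z : Fin n → ℂ) :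
    bracketOf n m x (y + z) = bracketOf n m x y + bracketOf n m x z := by
  unfold bracketOf
  rw [← Finset.sum_add_distrib]
  refine Finset.sum_congr rfl fun i _ => ?_
  rw [← Finset.sum_add_distrib]
  refine Finset.sum_congr rfl fun j _ => ?_
  simp [mul_add, add_smul]

lemma br_smul_right (n : ℕ) (m : ℕ → ℕ → Fin n → ℂ) (d : ℂ) (x y : Fin n → ℂ) :
    bracketOf n m x (d • y) = d • bracketOf n m x y := by
  unfold bracketOf
  rw [Finset.smul_sum]
  refine Finset.sum_congr rfl fun i _ => ?_
  rw [Finset.smul_sum]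
  refine Finset.sum_congr rfl fun j _ => ?_
  rw [Pi.smul_apply, smul_eq_mul, smul_smul]
  congr 1
  ring

lemma br_sum_right (n : ℕ) (m : ℕ → ℕ → Fin n → ℂ) (x : Fin n → ℂ)
    (s : Finset ℕ) (f : ℕ → Fin n → ℂ) :
    bracketOf n m x (∑ t ∈ s, f t) = ∑ t ∈ s, bracketOf n m x (f t) := by
  classical
  induction s using Finset.induction with
  | empty => simp [bracketOf]
  | insert _ _ h ih => rw [Finset.sum_insert h, Finset.sum_insert h, br_add_right, ih]
end Aux

/-- For any pre-derivation `P` of a second-family filiform Leibniz algebra,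
writing `P(e₃) = ∑ cₜ eₜ`, one has `c₁ = 0` and `c₂ βₜ = 0` for `4 ≤ t ≤ n-1`. -/
theorem stmt_13 (n : ℕ) (hn : 5 ≤ n) (β : ℕ → ℂ) (γ : ℂ)
    (hleib : ∀ x y z : Fin n → ℂ,
      bracketOf n (F2mul n β γ) (bracketOf n (F2mul n β γ) x y) z =
        bracketOf n (F2mul n β γ) (bracketOf n (F2mul n β γ) x z) y +
        bracketOf n (F2mul n β γ) x (bracketOf n (F2mul n β γ) y z))
    (P : Module.End ℂ (Fin n → ℂ))
    (hP : IsPreDeriv n (bracketOf n (F2mul n β γ)) P)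
    (c : ℕ → ℂ) (hc : P (E n 3) = ∑ t ∈ Icc 1 n, c t • E n t) :
    c 1 = 0 ∧ ∀ t, 4 ≤ t → t ≤ n - 1 → c 2 * β t = 0 := by
  -- Notation
  have key := hP (E n 1) (E n 1) (E n 3)
  rw [br_E3_right n hn β γ, br_E3_right n hn β γ, br_E3_right n hn β γ, map_zero] at key
  have e11 : bracketOf n (F2mul n β γ) (E n 1) (E n 1) = E n 3 := by
    rw [brEE n _ (le_refl 1) (by omega) (le_refl 1) (by omega)]
    unfold F2mul
    rw [if_pos ⟨rfl, rfl⟩]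
  rw [e11] at key
  have keq : bracketOf n (F2mul n β γ) (E n 3) (P (E n 3)) = 0 := by
    have := key.symm
    simpa using this
  rw [hc, br_sum_right] at keq
  have keq2 : ∑ t ∈ Icc 1 n, c t • F2mul n β γ 3 t = 0 := by
    rw [← keq]
    refine Finset.sum_congr rfl fun t ht => ?_
    rw [mem_Icc] at ht
    rw [br_smul_right, brEE n _ (by omega) (by omega) ht.1 ht.2]
  have hsub : ({1, 2} : Finset ℕ) ⊆ Icc 1 n := by
    intro x hx
    simp only [mem_insert, mem_singleton] at hx
    rw [mem_Icc]
    rcases hx with h | h <;> omega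
  have hzero : ∀ t ∈ Icc 1 n, t ∉ ({1, 2} : Finset ℕ) →
      c t • F2mul n β γ 3 t = 0 := by
    intro t ht hts
    simp only [mem_insert, mem_singleton, not_or] at hts
    rw [mem_Icc] at ht
    have hmt : F2mul n β γ 3 t = 0 := by
      unfold F2mul
      rw [if_neg (by omega), if_neg (by omega), if_neg (by omega),
          if_neg (by omega), if_neg (by omega)]
    rw [hmt, smul_zero]
  have hv : c 1 • F2mul n β γ 3 1 + c 2 • F2mul n β γ 3 2 = 0 := by
    rw [← keq2, ← Finset.sum_subset hsub hzero,
        Finset.sum_pair (by norm_num : (1 : ℕ) ≠ 2)]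
  have m31 : F2mul n β γ 3 1 = E n 4 := by
    unfold F2mul
    rw [if_neg (by omega), if_pos ⟨le_refl 3, by omega, rfl⟩]
  have m32 : F2mul n β γ 3 2 = ∑ t ∈ Icc 5 n, β (t - 3 + 2) • E n t := by
    unfold F2mul
    rw [if_neg (by omega), if_neg (by omega), if_neg (by omega),
        if_neg (by omega), if_pos ⟨le_refl 3, by omega, rfl⟩]
  rw [m31, m32] at hv
  have hc1 : c 1 = 0 := by
    have h3 := congrFun hv (⟨3, by omega⟩ : Fin n)
    have hz : ∀ t ∈ Icc 5 n,
        (β (t - 3 + 2) • E n t) ((⟨3, by omega⟩ : Fin n)) = 0 := by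
      intro t ht
      rw [mem_Icc] at ht
      rw [Pi.smul_apply, E_apply n t (by omega) (by omega),
          if_neg (by simp only [Fin.val_mk]; omega), smul_zero]
    rw [Pi.add_apply, Pi.smul_apply, Pi.smul_apply, Finset.sum_apply,
        Finset.sum_eq_zero hz, E_apply n 4 (by omega) (by omega),
        if_pos (by simp)] at h3
    simpa using h3
  refine ⟨hc1, fun t0 h4 hle => ?_⟩
  have h3 := congrFun hv (⟨t0, by omega⟩ : Fin n)
  have hsum : ∑ t ∈ Icc 5 n, (β (t - 3 + 2) • E n t) ((⟨t0, by omega⟩ : Fin n))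
      = β t0 := by
    rw [Finset.sum_eq_single (t0 + 1)]
    · rw [Pi.smul_apply, E_apply n (t0 + 1) (by omega) (by omega),
          if_pos (by simp only [Fin.val_mk]; omega)]
      have ht0 : t0 + 1 - 3 + 2 = t0 := by omega
      rw [ht0]
      simp
    · intro s hs hne
      rw [mem_Icc] at hs
      rw [Pi.smul_apply, E_apply n s (by omega) (by omega),
          if_neg (by simp only [Fin.val_mk]; omega), smul_zero]
    · intro hmem
      exact absurd (mem_Icc.mpr ⟨by omega, by omega⟩) hmem
  rw [Pi.add_apply, Pi.smul_apply, Pi.smul_apply, Finset.sum_apply, hsum,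
      E_apply n 4 (by omega) (by omega), if_neg (by simp only [Fin.val_mk]; omega), hc1] at h3
  simpa using h3
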